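/- Let H be a Hilbert space, K a bounded operator on H, and (Z_p) an increasing family of closed subspaces with orthogonal projections P_p such that K(Z_{p-1}) ⊆ Z_p and K*(Z_{p-1}) ⊆ Z_p for all p ≥ 1. With C := max{‖(I−P₀)K‖, ‖(I−P₀)K*‖}, for every r ≥ 1 and every p ≥ 1 one has ‖(I−P_p)K^r‖ ≤ ‖K^r − K P_{p-1} K^{r-1}‖ ≤ C · ‖(I−P_{p-1})K^{r-1}‖. -/

import Mathlib

open ContinuousLinearMap

/-- The orthogonal projection onto a submodule, as an operator on the ambient space. -/
noncomputable def proj {H : Type*} [NormedAddCommGroup H] [InnerProductSpace ℝ H]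
    (Z : Submodule ℝ H) [Z.HasOrthogonalProjection] : H →L[ℝ] H :=
  Z.subtypeL.comp Z.orthogonalProjectionOnto

lemma proj_apply_of_mem {H : Type*} [NormedAddCommGroup H] [InnerProductSpace ℝ H]
    (Z : Submodule ℝ H) [Z.HasOrthogonalProjection] {x : H} (hx : x ∈ Z) :
    _root_.proj Z x = x := by
  have h := Z.orthogonalProjectionOnto_mem_subspace_eq_self ⟨x, hx⟩
  simp only [_root_.proj, ContinuousLinearMap.comp_apply, h, Submodule.subtypeL_apply]

lemma norm_one_sub_proj_le {H : Type*} [NormedAddCommGroup H] [InnerProductSpace ℝ H]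
    (Z : Submodule ℝ H) [Z.HasOrthogonalProjection] :
    ‖(1 : H →L[ℝ] H) - _root_.proj Z‖ ≤ 1 := by
  refine opNorm_le_bound _ zero_le_one fun x => ?_
  have h : ((1 : H →L[ℝ] H) - _root_.proj Z) x = (Zᗮ.orthogonalProjectionOnto x : H) := by
    rw [Submodule.orthogonalProjectionOnto_orthogonal]
    rfl
  rw [h, one_mul]
  have h1 : ‖(Zᗮ.orthogonalProjectionOnto x : H)‖ = ‖Zᗮ.orthogonalProjectionOnto x‖ := rfl
  have h2 := (Zᗮ.orthogonalProjectionOnto).le_opNorm x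
  have h3 := Submodule.orthogonalProjectionOnto_norm_le Zᗮ
  nlinarith [norm_nonneg x]

theorem stmt1 {H : Type*} [NormedAddCommGroup H] [InnerProductSpace ℝ H] [CompleteSpace H]
    (K : H →L[ℝ] H) (Z : ℕ → Submodule ℝ H) [∀ p, (Z p).HasOrthogonalProjection]
    (hmono : Monotone Z)
    (hK : ∀ p : ℕ, 1 ≤ p → ∀ x ∈ Z (p - 1), K x ∈ Z p)
    (hKadj : ∀ p : ℕ, 1 ≤ p → ∀ x ∈ Z (p - 1), ContinuousLinearMap.adjoint K x ∈ Z p)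
    (C : ℝ)
    (hC : C = max ‖(1 - proj (Z 0)).comp K‖
               ‖(1 - proj (Z 0)).comp (ContinuousLinearMap.adjoint K)‖)
    (r p : ℕ) (hr : 1 ≤ r) (hp : 1 ≤ p) :
    ‖(1 - proj (Z p)).comp (K ^ r)‖ ≤
        ‖K ^ r - (K.comp (proj (Z (p - 1)))).comp (K ^ (r - 1))‖ ∧
      ‖K ^ r - (K.comp (proj (Z (p - 1)))).comp (K ^ (r - 1))‖ ≤
        C * ‖(1 - proj (Z (p - 1))).comp (K ^ (r - 1))‖ := by
  set P := _root_.proj (Z p) with hP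
  set Q := _root_.proj (Z (p - 1)) with hQ
  set A := K ^ r - (K.comp Q).comp (K ^ (r - 1)) with hA
  have hKr : K ^ r = K.comp (K ^ (r - 1)) := by
    conv_lhs => rw [← Nat.succ_pred_eq_of_pos hr]
    rw [pow_succ']
    rfl
  -- first inequality
  have h1 : (1 - P).comp (K ^ r) = (1 - P).comp A := by
    ext x
    have hmem : K (Q ((K ^ (r - 1)) x)) ∈ Z p := by
      apply hK p hp
      exact ((Z (p - 1)).orthogonalProjectionOnto ((K ^ (r - 1)) x)).2
    have hPfix : P (K (Q ((K ^ (r - 1)) x))) = K (Q ((K ^ (r - 1)) x)) :=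
      proj_apply_of_mem _ hmem
    simp only [hA, comp_apply, sub_apply, ContinuousLinearMap.one_apply, map_sub, hKr]
    simp only [comp_apply, hPfix]
    abel
  have first : ‖(1 - P).comp (K ^ r)‖ ≤ ‖A‖ := by
    rw [h1]
    calc ‖(1 - P).comp A‖ ≤ ‖1 - P‖ * ‖A‖ := opNorm_comp_le _ _
      _ ≤ 1 * ‖A‖ := mul_le_mul_of_nonneg_right (norm_one_sub_proj_le _) (norm_nonneg _)
      _ = ‖A‖ := one_mul _
  -- second inequality
  have hQidem : ∀ x : H, Q (Q x) = Q x := fun x =>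
    proj_apply_of_mem _ ((Z (p - 1)).orthogonalProjectionOnto x).2
  have hz : ∀ z : H, ((1 : H →L[ℝ] H) - Q) (((1 : H →L[ℝ] H) - Q) z)
      = ((1 : H →L[ℝ] H) - Q) z := by
    intro z
    simp only [sub_apply, ContinuousLinearMap.one_apply, map_sub, hQidem]
    abel
  have h2 : A = (K.comp (1 - Q)).comp ((1 - Q).comp (K ^ (r - 1))) := by
    ext x
    simp only [hA, comp_apply, sub_apply, ContinuousLinearMap.one_apply, hKr]
    simp only [comp_apply, map_sub, hQidem]
    abel
  have hQsa : IsSelfAdjoint Q :=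
    LinearMap.IsSymmetric.isSelfAdjoint ((Z (p - 1)).starProjection_isSymmetric)
  have hselfadj : ContinuousLinearMap.adjoint ((1 : H →L[ℝ] H) - Q) = 1 - Q :=
    ((IsSelfAdjoint.one (R := H →L[ℝ] H)).sub hQsa).adjoint_eq
  have hnormKQ : ‖K.comp (1 - Q)‖ = ‖(1 - Q).comp (ContinuousLinearMap.adjoint K)‖ := by
    rw [← LinearIsometryEquiv.norm_map (adjoint (𝕜 := ℝ) (E := H) (F := H)) (K.comp (1 - Q))]
    rw [show (adjoint (𝕜 := ℝ) (E := H) (F := H)) (K.comp (1 - Q))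
        = (1 - Q).comp (ContinuousLinearMap.adjoint K) from by rw [adjoint_comp, hselfadj]]
  -- (1 - Q) ∘ K* = (1 - Q) ∘ ((1 - P₀) ∘ K*)
  have hQP0 : (1 - Q).comp (ContinuousLinearMap.adjoint K) =
      (1 - Q).comp ((1 - _root_.proj (Z 0)).comp (ContinuousLinearMap.adjoint K)) := by
    ext x
    simp only [comp_apply, sub_apply, ContinuousLinearMap.one_apply, map_sub]
    have h0 : _root_.proj (Z 0) (ContinuousLinearMap.adjoint K x) ∈ Z (p - 1) :=
      hmono (Nat.zero_le _) ((Z 0).orthogonalProjectionOnto _).2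
    rw [proj_apply_of_mem _ h0]
    abel
  have hbound : ‖(1 - Q).comp (ContinuousLinearMap.adjoint K)‖ ≤ C := by
    rw [hQP0]
    calc ‖(1 - Q).comp ((1 - _root_.proj (Z 0)).comp (ContinuousLinearMap.adjoint K))‖
        ≤ ‖(1 : H →L[ℝ] H) - Q‖ *
            ‖(1 - _root_.proj (Z 0)).comp (ContinuousLinearMap.adjoint K)‖ :=
          opNorm_comp_le _ _
      _ ≤ 1 * ‖(1 - _root_.proj (Z 0)).comp (ContinuousLinearMap.adjoint K)‖ :=
          mul_le_mul_of_nonneg_right (norm_one_sub_proj_le _) (norm_nonneg _)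
      _ = ‖(1 - _root_.proj (Z 0)).comp (ContinuousLinearMap.adjoint K)‖ := one_mul _
      _ ≤ C := hC ▸ le_max_right _ _
  have second : ‖A‖ ≤ C * ‖(1 - Q).comp (K ^ (r - 1))‖ := by
    rw [h2]
    calc ‖(K.comp (1 - Q)).comp ((1 - Q).comp (K ^ (r - 1)))‖
        ≤ ‖K.comp (1 - Q)‖ * ‖(1 - Q).comp (K ^ (r - 1))‖ := opNorm_comp_le _ _
      _ ≤ C * ‖(1 - Q).comp (K ^ (r - 1))‖ := by
          apply mul_le_mul_of_nonneg_right _ (norm_nonneg _)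
          rw [hnormKQ]
          exact hbound
  exact ⟨first, second⟩
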